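/- Fix an integer n ≥ 1. Let ψ be the C-algebra homomorphism from the polynomial ring C[t, X_1, …, X_{n+3}] onto the quotient ring C[t, X_1, X_2, X_3]/(X_1 X_2 − t(X_1 + X_2)) that fixes t, X_1, X_2, sends X_3 to (the class of) X_3, and sends X_{k+3} to (the class of) t^k X_3 for k = 1, …, n. Then the kernel of ψ is exactly the ideal generated by the 2×2 minors of the 2×(n+2) matrix whose columns are (1, t), (X_1 + X_2, X_1 X_2), and (X_{k+2}, X_{k+3}) for k = 1, …, n. -/

import Mathlib

open MvPolynomial

noncomputable abbrev chartRing0 : Type :=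
  MvPolynomial (Fin 4) ℂ ⧸
    Ideal.span {(X 1 * X 2 - X 0 * (X 1 + X 2) : MvPolynomial (Fin 4) ℂ)}

noncomputable def chartHom0 (n : ℕ) :
    MvPolynomial (Fin (n + 4)) ℂ →ₐ[ℂ] chartRing0 :=
  aeval fun i : Fin (n + 4) =>
    if h : (i : ℕ) ≤ 3 then Ideal.Quotient.mk _ (X ⟨(i : ℕ), by omega⟩)
    else Ideal.Quotient.mk _ (X 0 ^ ((i : ℕ) - 3) * X 3)

noncomputable abbrev relP : MvPolynomial (Fin 4) ℂ := X 1 * X 2 - X 0 * (X 1 + X 2)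

noncomputable def sig (n : ℕ) : Fin (n + 4) → MvPolynomial (Fin 4) ℂ := fun i =>
  if h : (i : ℕ) ≤ 3 then X ⟨(i : ℕ), by omega⟩ else X 0 ^ ((i : ℕ) - 3) * X 3

lemma hom_eq (n : ℕ) : chartHom0 n
    = (Ideal.Quotient.mkₐ ℂ (Ideal.span {relP})).comp (aeval (sig n)) := by
  apply MvPolynomial.algHom_ext
  intro i
  simp only [chartHom0, aeval_X, AlgHom.comp_apply, Ideal.Quotient.mkₐ_eq_mk, sig]
  split <;> simp

lemma sig_castLE (n : ℕ) (i : Fin 4) :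
    sig n (Fin.castLE (by omega) i) = X i := by
  have h : ((Fin.castLE (by omega : 4 ≤ n+4) i : Fin (n+4)) : ℕ) = (i : ℕ) := rfl
  simp only [sig, h]
  rw [dif_pos (by omega)]

noncomputable def cha0Row1 (n : ℕ) : Fin (n + 2) → MvPolynomial (Fin (n + 4)) ℂ := fun k =>
  if (k : ℕ) = 0 then 1
  else if (k : ℕ) = 1 then X 1 + X 2
  else X ⟨(k : ℕ) + 1, by omega⟩

noncomputable def chz0Row2 (n : ℕ) : Fin (n + 2) → MvPolynomial (Fin (n + 4)) ℂ := fun k =>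
  if (k : ℕ) = 0 then X 0
  else if (k : ℕ) = 1 then X 1 * X 2
  else X ⟨(k : ℕ) + 2, by omega⟩

lemma keyBA (n : ℕ) (k : Fin (n+2)) :
    aeval (sig n) (chz0Row2 n k) = X 0 * aeval (sig n) (cha0Row1 n k)
      + (if (k : ℕ) = 1 then relP else 0) := by
  by_cases h0 : (k : ℕ) = 0
  · simp only [chz0Row2, cha0Row1, h0, if_pos, if_neg (by omega : ¬ (0:ℕ) = 1)]
    simp [sig, aeval_X, show ((0 : Fin (n+4)) : ℕ) = 0 from rfl]
  by_cases h1 : (k : ℕ) = 1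
  · simp only [chz0Row2, cha0Row1, if_neg h0, if_pos h1, map_mul, map_add, aeval_X]
    simp [sig, show ((1 : Fin (n+4)) : ℕ) = 1 from by simp,
      show ((2 : Fin (n+4)) : ℕ) = 2 from by simp, relP,
      show 2 % (n+4) = 2 from Nat.mod_eq_of_lt (by omega),
      show ∀ h, (⟨2, h⟩ : Fin 4) = 2 from fun _ => rfl]
  · have h2 : 2 ≤ (k : ℕ) := by omega
    simp only [chz0Row2, cha0Row1, if_neg h0, if_neg h1, aeval_X]
    simp only [sig]
    rw [dif_neg (by omega : ¬ (k : ℕ) + 2 ≤ 3)]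
    by_cases h3 : (k : ℕ) = 2
    · rw [dif_pos (by omega : (k : ℕ) + 1 ≤ 3)]
      simp [h3, show ((⟨3, by omega⟩ : Fin 4)) = 3 from rfl, pow_one]
    · rw [dif_neg (by omega : ¬ (k : ℕ) + 1 ≤ 3)]
      rw [show (k : ℕ) + 2 - 3 = ((k:ℕ) + 1 - 3) + 1 from by omega, pow_succ]
      ring

lemma minor_ker (n : ℕ) (i j : Fin (n+2)) :
    chartHom0 n (cha0Row1 n i * chz0Row2 n j - cha0Row1 n j * chz0Row2 n i) = 0 := by
  rw [hom_eq, AlgHom.comp_apply, Ideal.Quotient.mkₐ_eq_mk,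
    Ideal.Quotient.eq_zero_iff_mem, map_sub, map_mul, map_mul, keyBA, keyBA]
  rw [Ideal.mem_span_singleton]
  refine ⟨(if (j : ℕ) = 1 then aeval (sig n) (cha0Row1 n i) else 0)
    - (if (i : ℕ) = 1 then aeval (sig n) (cha0Row1 n j) else 0), ?_⟩
  split_ifs <;> ring

noncomputable def minorIdeal (n : ℕ) : Ideal (MvPolynomial (Fin (n + 4)) ℂ) :=
  Ideal.span {m | ∃ i j : Fin (n + 2),
    m = cha0Row1 n i * chz0Row2 n j - cha0Row1 n j * chz0Row2 n i}

lemma step_mem (n : ℕ) (a : ℕ) (h3 : 3 ≤ a) (hb : a + 1 ≤ n + 3)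
    (h1 : a + 1 < n + 4) (h2 : a < n + 4) :
    (X ⟨a + 1, h1⟩ - X 0 * X ⟨a, h2⟩ : MvPolynomial (Fin (n+4)) ℂ) ∈ minorIdeal n := by
  have hk : a - 1 < n + 2 := by omega
  have hg : cha0Row1 n 0 * chz0Row2 n ⟨a - 1, hk⟩ - cha0Row1 n ⟨a - 1, hk⟩ * chz0Row2 n 0
      ∈ minorIdeal n := Ideal.subset_span ⟨0, ⟨a - 1, hk⟩, rfl⟩
  have he : cha0Row1 n 0 * chz0Row2 n ⟨a - 1, hk⟩ - cha0Row1 n ⟨a - 1, hk⟩ * chz0Row2 n 0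
      = X ⟨a + 1, h1⟩ - X 0 * X ⟨a, h2⟩ := by
    simp only [cha0Row1, chz0Row2, Fin.val_zero, Fin.val_mk]
    rw [if_pos trivial, if_pos trivial, if_neg (by omega : ¬ a - 1 = 0),
      if_neg (by omega : ¬ a - 1 = 1), if_neg (by omega : ¬ a - 1 = 0),
      if_neg (by omega : ¬ a - 1 = 1)]
    simp only [show a - 1 + 2 = a + 1 from by omega, show a - 1 + 1 = a from by omega]
    ring
  rwa [he] at hg

lemma tele_mem (n : ℕ) : ∀ m : ℕ, 4 ≤ m → ∀ hm : m < n + 4,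
    (X ⟨m, hm⟩ - X 0 ^ (m - 3) * X 3 : MvPolynomial (Fin (n+4)) ℂ) ∈ minorIdeal n := by
  intro m
  induction m with
  | zero => omega
  | succ a ih =>
    intro h4 hm
    by_cases ha : a = 3
    · subst ha
      have := step_mem n 3 le_rfl (by omega) hm (by omega)
      rw [show (4 : ℕ) - 3 = 1 from rfl, pow_one]
      rwa [show (⟨3, by omega⟩ : Fin (n+4)) = 3 from Fin.ext rfl] at this
    · have h4a : 4 ≤ a := by omega
      have hma : a < n + 4 := by omega
      have hstep := step_mem n a (by omega) (by omega) hm hma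
      have hih := ih h4a hma
      have key : (X ⟨a + 1, hm⟩ - X 0 ^ (a + 1 - 3) * X 3 : MvPolynomial (Fin (n+4)) ℂ)
          = (X ⟨a + 1, hm⟩ - X 0 * X ⟨a, hma⟩)
            + X 0 * (X ⟨a, hma⟩ - X 0 ^ (a - 3) * X 3) := by
        rw [show a + 1 - 3 = (a - 3) + 1 from by omega, pow_succ]
        ring
      rw [key]
      exact add_mem hstep (Ideal.mul_mem_left _ _ hih)

lemma gen_diff (n : ℕ) (i : Fin (n + 4)) :
    (X i - rename (Fin.castLE (by omega : 4 ≤ n + 4)) (sig n i)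
      : MvPolynomial (Fin (n+4)) ℂ) ∈ minorIdeal n := by
  by_cases h : (i : ℕ) ≤ 3
  · rw [sig, dif_pos h, rename_X,
      show Fin.castLE (by omega : 4 ≤ n + 4) ⟨(i : ℕ), by omega⟩ = i from Fin.ext rfl,
      sub_self]
    exact zero_mem _
  · rw [sig, dif_neg h, map_mul, map_pow, rename_X, rename_X,
      show Fin.castLE (by omega : 4 ≤ n + 4) 0 = 0 from Fin.ext rfl,
      show Fin.castLE (by omega : 4 ≤ n + 4) 3 = 3 from Fin.ext rfl]
    have := tele_mem n (i : ℕ) (by omega) i.isLt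
    rwa [Fin.eta] at this

lemma claim1 (n : ℕ) (p : MvPolynomial (Fin (n+4)) ℂ) :
    p - rename (Fin.castLE (by omega : 4 ≤ n + 4)) (aeval (sig n) p) ∈ minorIdeal n := by
  induction p using MvPolynomial.induction_on with
  | C a => rw [aeval_C, algebraMap_eq, rename_C, sub_self]; exact zero_mem _
  | add p q hp hq =>
    rw [map_add, map_add]
    have : p + q - (rename (Fin.castLE (by omega : 4 ≤ n + 4)) (aeval (sig n) p)
        + rename (Fin.castLE (by omega : 4 ≤ n + 4)) (aeval (sig n) q))
        = (p - rename (Fin.castLE (by omega : 4 ≤ n + 4)) (aeval (sig n) p))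
        + (q - rename (Fin.castLE (by omega : 4 ≤ n + 4)) (aeval (sig n) q)) := by ring
    rw [this]; exact add_mem hp hq
  | mul_X p i hp =>
    rw [map_mul, map_mul, aeval_X]
    have : p * X i - rename (Fin.castLE (by omega : 4 ≤ n + 4)) (aeval (sig n) p)
          * rename (Fin.castLE (by omega : 4 ≤ n + 4)) (sig n i)
        = p * (X i - rename (Fin.castLE (by omega : 4 ≤ n + 4)) (sig n i))
        + rename (Fin.castLE (by omega : 4 ≤ n + 4)) (sig n i)
          * (p - rename (Fin.castLE (by omega : 4 ≤ n + 4)) (aeval (sig n) p)) := by ring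
    rw [this]
    exact add_mem (Ideal.mul_mem_left _ _ (gen_diff n i)) (Ideal.mul_mem_left _ _ hp)

lemma rel_mem (n : ℕ) :
    (rename (Fin.castLE (by omega : 4 ≤ n + 4)) relP : MvPolynomial (Fin (n+4)) ℂ)
      ∈ minorIdeal n := by
  have hg : cha0Row1 n 0 * chz0Row2 n 1 - cha0Row1 n 1 * chz0Row2 n 0 ∈ minorIdeal n :=
    Ideal.subset_span ⟨0, 1, rfl⟩
  have he : cha0Row1 n 0 * chz0Row2 n 1 - cha0Row1 n 1 * chz0Row2 n 0
      = rename (Fin.castLE (by omega : 4 ≤ n + 4)) relP := by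
    rw [relP, map_sub, map_mul, map_mul, map_add, rename_X, rename_X, rename_X,
      show Fin.castLE (by omega : 4 ≤ n + 4) 0 = 0 from Fin.ext rfl,
      show Fin.castLE (by omega : 4 ≤ n + 4) 1 = 1 from Fin.ext rfl,
      show Fin.castLE (by omega : 4 ≤ n + 4) 2 = 2 from Fin.ext rfl]
    simp only [cha0Row1, chz0Row2, show ((0 : Fin (n+2)) : ℕ) = 0 from rfl,
      show ((1 : Fin (n+2)) : ℕ) = 1 from rfl]
    norm_num
    ring
  rw [← he]; exact hg

theorem stmt11 (n : ℕ) (hn : 1 ≤ n) :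
    Function.Surjective (chartHom0 n) ∧
    RingHom.ker (chartHom0 n) =
      Ideal.span {m | ∃ i j : Fin (n + 2),
        m = cha0Row1 n i * chz0Row2 n j - cha0Row1 n j * chz0Row2 n i} := by
  constructor
  · intro y
    obtain ⟨q, rfl⟩ := Ideal.Quotient.mk_surjective y
    refine ⟨rename (Fin.castLE (by omega : 4 ≤ n + 4)) q, ?_⟩
    rw [hom_eq, AlgHom.comp_apply, aeval_rename,
      show sig n ∘ Fin.castLE (by omega : 4 ≤ n + 4) = X from funext (sig_castLE n),
      Ideal.Quotient.mkₐ_eq_mk, aeval_X_left_apply]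
  · show RingHom.ker (chartHom0 n) = minorIdeal n
    apply le_antisymm
    · intro p hp
      rw [RingHom.mem_ker, hom_eq, AlgHom.comp_apply, Ideal.Quotient.mkₐ_eq_mk,
        Ideal.Quotient.eq_zero_iff_mem] at hp
      obtain ⟨c, hc⟩ := Ideal.mem_span_singleton'.mp hp
      have hsplit : p = (p - rename (Fin.castLE (by omega : 4 ≤ n + 4)) (aeval (sig n) p))
          + rename (Fin.castLE (by omega : 4 ≤ n + 4)) (aeval (sig n) p) := by ring
      rw [hsplit]
      refine add_mem (claim1 n p) ?_
      rw [← hc, map_mul]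
      exact Ideal.mul_mem_left _ _ (rel_mem n)
    · rw [minorIdeal, Ideal.span_le]
      rintro m ⟨i, j, rfl⟩
      rw [SetLike.mem_coe, RingHom.mem_ker]
      exact minor_ker n i j
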